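/- Suppose α ∈ (0,1/2), β ∈ (0,2/3) satisfy αβ(-1/2 + α/3 + β/4) + 1/54 = 0. Then the equation αβγ(-1 + α/2 + 3β/8 + γ/3) + 1/480 = 0, viewed as a quadratic in γ, simplifies to (αβ/3)γ² - (αβ/4 + 1/36)γ + 1/480 = 0, and its smaller root γ = [(αβ/4 + 1/36) - √((αβ/4 + 1/36)² - αβ/360)] / (2αβ/3) lies in (0, 3/4). -/

import Mathlib

/-- If α ∈ (0,1/2), β ∈ (0,2/3) satisfy the surface orthogonality condition, then the
volume orthogonality equation in γ is equivalent to
(αβ/3)γ² - (αβ/4 + 1/36)γ + 1/480 = 0, and its smaller root lies in (0,3/4). -/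
theorem stmt4 (α β : ℝ) (hα : α ∈ Set.Ioo (0:ℝ) (1/2)) (hβ : β ∈ Set.Ioo (0:ℝ) (2/3))
    (hsurf : α * β * (-1/2 + α/3 + β/4) + 1/54 = 0) :
    (∀ γ : ℝ, α * β * γ * (-1 + α/2 + 3*β/8 + γ/3) + 1/480 = 0 ↔
      (α*β/3) * γ^2 - (α*β/4 + 1/36) * γ + 1/480 = 0) ∧
    (let γ₀ : ℝ :=
      ((α*β/4 + 1/36) - Real.sqrt ((α*β/4 + 1/36)^2 - α*β/360)) / (2*α*β/3);
      (α*β/3) * γ₀^2 - (α*β/4 + 1/36) * γ₀ + 1/480 = 0 ∧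
      (∀ γ : ℝ, (α*β/3) * γ^2 - (α*β/4 + 1/36) * γ + 1/480 = 0 → γ₀ ≤ γ) ∧
      γ₀ ∈ Set.Ioo (0:ℝ) (3/4)) := by
  obtain ⟨hα0, hα1⟩ := hα
  obtain ⟨hβ0, hβ1⟩ := hβ
  have ht : 0 < α * β := mul_pos hα0 hβ0
  set t := α * β with htdef
  set b : ℝ := t/4 + 1/36 with hbdef
  have hb0 : 0 < b := by positivity
  have hD : 0 < b^2 - t/360 := by nlinarith [sq_nonneg (t/4 - 1/90)]
  set s : ℝ := Real.sqrt (b^2 - t/360) with hsdef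
  have hs0 : 0 ≤ s := Real.sqrt_nonneg _
  have hs2 : s^2 = b^2 - t/360 := Real.sq_sqrt hD.le
  have hslt : s < b := by
    have h1 := Real.sqrt_lt_sqrt (le_of_lt hD) (by nlinarith : b^2 - t/360 < b^2)
    rwa [Real.sqrt_sq hb0.le] at h1
  constructor
  · intro γ
    constructor
    · intro h
      linear_combination h - (3/2) * γ * hsurf
    · intro h
      linear_combination h + (3/2) * γ * hsurf
  · intro γ₀
    have hγ₀ : γ₀ = (b - s) / (2*t/3) := by
      show (b - s) / (2*α*β/3) = (b - s) / (2*t/3)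
      rw [htdef]; ring
    have h2t : (2*t/3) ≠ 0 := by positivity
    refine ⟨?_, ?_, ?_, ?_⟩
    · rw [hγ₀]
      field_simp
      ring_nf
      have hs2' : s^2 = (α*β/4+1/36)^2 - α*β/360 := by rw [hs2, hbdef, htdef]
      linear_combination 1440 * hs2'
    · intro γ hγ
      rw [hγ₀, div_le_iff₀ (by positivity)]
      nlinarith [sq_nonneg (2*(t/3)*γ - b + s), sq_nonneg (2*(t/3)*γ - b - s)]
    · rw [hγ₀]
      exact div_pos (by linarith) (by positivity)
    · rw [hγ₀, div_lt_iff₀ (by positivity)]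
      nlinarith [sq_nonneg (s - (b - t/2)), sq_nonneg (s + (b - t/2))]
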